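/- There exist C > 0 and s₀ ≥ 1 such that for all s ≥ s₀ and all y ∈ ℝ: |R(y,s)| ≤ C/√s, where R(y,s) = −∂_s φ(y,s) + ∂_y² φ(y,s) − (y/2)·∂_y φ(y,s) − ((1+iδ)/(p−1))·φ(y,s) + (1+iδ)·|φ(y,s)|^{p−1}·φ(y,s). -/

import Mathlib

open Complex

/-- `x^w := exp(w · log x)` for a positive real base `x` and complex exponent `w`. -/
noncomputable def rcpow (x : ℝ) (w : ℂ) : ℂ := Complex.exp (w * Real.log x)

/-- The approximate profile
`φ(y,s) = κ^{−iδ}·(p−1 + b y²/√s)^{−(1+iδ)/(p−1)} + (1+iδ)·a/√s`. -/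
noncomputable def phiA (p δ κ b a : ℝ) (y s : ℝ) : ℂ :=
  rcpow κ (-(Complex.I * δ)) *
    rcpow (p - 1 + b * y ^ 2 / Real.sqrt s) (-(1 + Complex.I * δ) / (p - 1)) +
  (1 + Complex.I * δ) * ((a / Real.sqrt s : ℝ) : ℂ)

/-- The error term
`R(y,s) = −∂_s φ + ∂_y²φ − (y/2)∂_y φ − ((1+iδ)/(p−1))φ + (1+iδ)|φ|^{p−1}φ`. -/
noncomputable def Rt (p δ κ b a : ℝ) (y s : ℝ) : ℂ :=
  - deriv (fun σ => phiA p δ κ b a y σ) s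
  + deriv (deriv (fun z => phiA p δ κ b a z s)) y
  - ((y / 2 : ℝ) : ℂ) * deriv (fun z => phiA p δ κ b a z s) y
  - ((1 + Complex.I * δ) / (p - 1)) * phiA p δ κ b a y s
  + (1 + Complex.I * δ) * ((‖phiA p δ κ b a y s‖ ^ (p - 1) : ℝ) : ℂ) *
      phiA p δ κ b a y s

lemma hasDerivAt_rcpow_comp {f : ℝ → ℝ} {f' x : ℝ} (hf : HasDerivAt f f' x)
    (hx : 0 < f x) (w : ℂ) :
    HasDerivAt (fun t => rcpow (f t) w)
      (rcpow (f x) w * (w * ((f' : ℂ) / ((f x : ℝ) : ℂ)))) x := by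
  have hlog : HasDerivAt (fun t => Real.log (f t)) (f' / f x) x := hf.log hx.ne'
  have h1 : HasDerivAt (fun t => ((Real.log (f t) : ℝ) : ℂ)) ((f' / f x : ℝ) : ℂ) x :=
    hlog.ofReal_comp
  have h2 := (h1.const_mul w).cexp
  have : (w * ((f' / f x : ℝ) : ℂ)) = (w * ((f' : ℂ) / ((f x : ℝ) : ℂ))) := by push_cast; ring
  simpa [rcpow, this] using h2

lemma rpow_diff_mul_le {q M r ρ ε : ℝ} (hq : 0 < q) (hr : 0 ≤ r) (hρ : 0 ≤ ρ)
    (hrM : r ≤ M) (hρM : ρ ≤ M) (hε : |r - ρ| ≤ ε) :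
    |r ^ q - ρ ^ q| * ρ ≤ (4 + 3 * q) * M ^ q * ε := by
  have hM0 : 0 ≤ M := le_trans hr hrM
  have hε0 : 0 ≤ ε := le_trans (abs_nonneg _) hε
  have hMq : 0 ≤ M ^ q := Real.rpow_nonneg hM0 q
  have hrq : r ^ q ≤ M ^ q := Real.rpow_le_rpow hr hrM hq.le
  have hρq : ρ ^ q ≤ M ^ q := Real.rpow_le_rpow hρ hρM hq.le
  rcases le_or_gt ρ (2 * ε) with hcase | hcase
  · have h1 : |r ^ q - ρ ^ q| ≤ 2 * M ^ q := by
      have h2 : |r ^ q| = r ^ q := _root_.abs_of_nonneg (Real.rpow_nonneg hr q)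
      have h3 : |ρ ^ q| = ρ ^ q := _root_.abs_of_nonneg (Real.rpow_nonneg hρ q)
      calc |r ^ q - ρ ^ q| ≤ |r ^ q| + |ρ ^ q| := abs_sub _ _
        _ ≤ 2 * M ^ q := by rw [h2, h3]; linarith
    calc |r ^ q - ρ ^ q| * ρ ≤ (2 * M ^ q) * (2 * ε) :=
          mul_le_mul h1 hcase hρ (by positivity)
      _ ≤ (4 + 3 * q) * M ^ q * ε := by nlinarith [mul_nonneg (mul_nonneg hq.le hMq) hε0]
  · have hρ2 : 0 < ρ / 2 := by linarith
    have hrlow : ρ / 2 ≤ r := by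
      have := abs_le.mp hε
      linarith [this.1, this.2]
    have hρM2 : ρ / 2 ≤ M := le_trans (by linarith) hρM
    set S : Set ℝ := Set.Icc (ρ / 2) M
    have hconv : Convex ℝ S := convex_Icc _ _
    set Cd : ℝ := q * ((ρ / 2) ^ (q - 1) + M ^ (q - 1))
    have hderiv : ∀ t ∈ S, HasDerivWithinAt (fun t : ℝ => t ^ q) (q * t ^ (q - 1)) S t := by
      intro t ht
      exact (Real.hasDerivAt_rpow_const (Or.inl (by nlinarith [ht.1] : t ≠ 0))).hasDerivWithinAt
    have hbound : ∀ t ∈ S, ‖q * t ^ (q - 1)‖ ≤ Cd := by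
      intro t ht
      have ht0 : 0 < t := lt_of_lt_of_le hρ2 ht.1
      have h1 : t ^ (q - 1) ≤ (ρ / 2) ^ (q - 1) + M ^ (q - 1) := by
        rcases le_or_gt 1 q with hq1 | hq1
        · have : t ^ (q - 1) ≤ M ^ (q - 1) := Real.rpow_le_rpow ht0.le ht.2 (by linarith)
          have h2 : 0 ≤ (ρ / 2) ^ (q - 1) := Real.rpow_nonneg hρ2.le _
          linarith
        · have : t ^ (q - 1) ≤ (ρ / 2) ^ (q - 1) :=
            Real.rpow_le_rpow_of_nonpos hρ2 ht.1 (by linarith)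
          have h2 : 0 ≤ M ^ (q - 1) := Real.rpow_nonneg hM0 _
          linarith
      rw [Real.norm_eq_abs, _root_.abs_of_nonneg (by positivity : (0:ℝ) ≤ q * t ^ (q-1))]
      have := mul_le_mul_of_nonneg_left h1 hq.le
      simpa [Cd, mul_add] using this
    have hρS : ρ ∈ S := ⟨by linarith, hρM⟩
    have hrS : r ∈ S := ⟨hrlow, hrM⟩
    have hmvt := hconv.norm_image_sub_le_of_norm_hasDerivWithin_le hderiv hbound hρS hrS
    rw [Real.norm_eq_abs, Real.norm_eq_abs] at hmvt
    have hstep : |r ^ q - ρ ^ q| * ρ ≤ Cd * ε * ρ := by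
      have h2 : |r ^ q - ρ ^ q| ≤ Cd * ε := by
        refine le_trans hmvt ?_
        have hCd0 : 0 ≤ Cd := by
          have := Real.rpow_nonneg hρ2.le (q-1); have := Real.rpow_nonneg hM0 (q-1)
          positivity
        exact mul_le_mul_of_nonneg_left hε hCd0
      exact mul_le_mul_of_nonneg_right h2 hρ
    refine le_trans hstep ?_
    have key : Cd * ρ ≤ 3 * q * M ^ q := by
      have e1 : (ρ / 2) ^ (q - 1) * ρ = 2 * (ρ / 2) ^ q := by
        have : (ρ/2) ^ q = (ρ/2) ^ (q - 1) * (ρ/2) ^ (1:ℝ) := by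
          rw [← Real.rpow_add hρ2]; norm_num
        rw [this, Real.rpow_one]; ring
      have e2 : (ρ / 2) ^ q ≤ M ^ q := Real.rpow_le_rpow hρ2.le hρM2 hq.le
      have e3 : M ^ (q - 1) * ρ ≤ M ^ q := by
        have : M ^ (q-1) * ρ ≤ M ^ (q-1) * M :=
          mul_le_mul_of_nonneg_left hρM (Real.rpow_nonneg hM0 _)
        have e4 : M ^ (q-1) * M = M ^ q := by
          rcases hM0.eq_or_lt with h|h
          · rw [← h]; simp [Real.zero_rpow hq.ne']
          · rw [← Real.rpow_add_one h.ne']; norm_num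
        linarith
      have : Cd * ρ = q * ((ρ/2)^(q-1) * ρ) + q * (M^(q-1) * ρ) := by simp [Cd]; ring
      rw [this, e1]
      nlinarith [mul_le_mul_of_nonneg_left e2 hq.le, mul_le_mul_of_nonneg_left e3 hq.le]
    calc Cd * ε * ρ = (Cd * ρ) * ε := by ring
      _ ≤ (3 * q * M ^ q) * ε := mul_le_mul_of_nonneg_right key hε0
      _ ≤ (4 + 3 * q) * M ^ q * ε := by nlinarith

section derivs
variable (p δ κ b a y s : ℝ)

lemma X_pos (hp : 1 < p) (hb : 0 ≤ b) (hs : 0 < s) :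
    0 < p - 1 + b * y ^ 2 / Real.sqrt s := by
  have h1 : 0 ≤ b * y ^ 2 / Real.sqrt s := by positivity
  linarith

lemma hasDerivAt_X_s (hb : 0 ≤ b) (hs : 0 < s) :
    HasDerivAt (fun σ => p - 1 + b * y ^ 2 / Real.sqrt σ)
      (-(b * y ^ 2 / (2 * s * Real.sqrt s))) s := by
  have hrs0 : 0 < Real.sqrt s := Real.sqrt_pos.mpr hs
  have hsq : HasDerivAt Real.sqrt (1 / (2 * Real.sqrt s)) s := Real.hasDerivAt_sqrt hs.ne'
  have h := ((hasDerivAt_const s (b * y ^ 2)).div hsq hrs0.ne').const_add (p - 1)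
  refine h.congr_deriv (Eq.symm ?_)
  rw [Real.sq_sqrt hs.le]
  field_simp
  ring

lemma hasDerivAt_X_y (hs : 0 < s) (z : ℝ) :
    HasDerivAt (fun z => p - 1 + b * z ^ 2 / Real.sqrt s) (2 * b * z / Real.sqrt s) z := by
  have h := (((hasDerivAt_pow 2 z).const_mul b).div_const (Real.sqrt s)).const_add (p - 1)
  refine h.congr_deriv (Eq.symm ?_)
  push_cast
  ring

lemma hasDerivAt_phiA_s (hp : 1 < p) (hb : 0 ≤ b) (hs : 0 < s) :
    HasDerivAt (fun σ => phiA p δ κ b a y σ)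
      (rcpow κ (-(Complex.I * δ)) *
        (rcpow (p - 1 + b * y ^ 2 / Real.sqrt s) (-(1 + Complex.I * δ) / (p - 1)) *
          (-(1 + Complex.I * δ) / (p - 1) *
            (((-(b * y ^ 2 / (2 * s * Real.sqrt s)) : ℝ) : ℂ) /
              ((p - 1 + b * y ^ 2 / Real.sqrt s : ℝ) : ℂ)))) +
       (1 + Complex.I * δ) * ((-(a / (2 * s * Real.sqrt s)) : ℝ) : ℂ)) s := by
  have hrs0 : 0 < Real.sqrt s := Real.sqrt_pos.mpr hs
  have hsq : HasDerivAt Real.sqrt (1 / (2 * Real.sqrt s)) s := Real.hasDerivAt_sqrt hs.ne'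
  have h1 := hasDerivAt_rcpow_comp (hasDerivAt_X_s p b y s hb hs) (X_pos p b y s hp hb hs)
      (-(1 + Complex.I * δ) / (p - 1))
  have h2 := h1.const_mul (rcpow κ (-(Complex.I * δ)))
  have h3 : HasDerivAt (fun σ => a / Real.sqrt σ) (-(a / (2 * s * Real.sqrt s))) s := by
    have h := (hasDerivAt_const s a).div hsq hrs0.ne'
    refine h.congr_deriv (Eq.symm ?_)
    rw [Real.sq_sqrt hs.le]
    field_simp
    ring
  have h4 := (h3.ofReal_comp).const_mul (1 + Complex.I * (δ : ℂ))
  have h5 := h2.add h4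
  exact h5

lemma hasDerivAt_phiA_y (hp : 1 < p) (hb : 0 ≤ b) (hs : 0 < s) (z : ℝ) :
    HasDerivAt (fun z => phiA p δ κ b a z s)
      (rcpow κ (-(Complex.I * δ)) *
        (rcpow (p - 1 + b * z ^ 2 / Real.sqrt s) (-(1 + Complex.I * δ) / (p - 1)) *
          (-(1 + Complex.I * δ) / (p - 1) *
            (((2 * b * z / Real.sqrt s : ℝ) : ℂ) /
              ((p - 1 + b * z ^ 2 / Real.sqrt s : ℝ) : ℂ))))) z := by
  have h1 := hasDerivAt_rcpow_comp (hasDerivAt_X_y p b s hs z) (X_pos p b z s hp hb hs)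
      (-(1 + Complex.I * δ) / (p - 1))
  have h2 := h1.const_mul (rcpow κ (-(Complex.I * δ)))
  have h5 := h2.add (hasDerivAt_const z ((1 + Complex.I * (δ:ℂ)) * ((a / Real.sqrt s : ℝ) : ℂ)))
  refine h5.congr_deriv (Eq.symm ?_)
  ring

lemma deriv2_phiA (hp : 1 < p) (hb : 0 ≤ b) (hs : 0 < s) :
    deriv (deriv (fun z => phiA p δ κ b a z s)) y =
      rcpow κ (-(Complex.I * δ)) * (-(1 + Complex.I * δ) / (p - 1)) *
        ((rcpow (p - 1 + b * y ^ 2 / Real.sqrt s) (-(1 + Complex.I * δ) / (p - 1)) *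
            (-(1 + Complex.I * δ) / (p - 1) *
              (((2 * b * y / Real.sqrt s : ℝ) : ℂ) /
                ((p - 1 + b * y ^ 2 / Real.sqrt s : ℝ) : ℂ)))) *
          ((2 * b * y / Real.sqrt s / (p - 1 + b * y ^ 2 / Real.sqrt s) : ℝ) : ℂ) +
         rcpow (p - 1 + b * y ^ 2 / Real.sqrt s) (-(1 + Complex.I * δ) / (p - 1)) *
          (((2 * b / Real.sqrt s * (p - 1 + b * y ^ 2 / Real.sqrt s) -
              2 * b * y / Real.sqrt s * (2 * b * y / Real.sqrt s)) /
            (p - 1 + b * y ^ 2 / Real.sqrt s) ^ 2 : ℝ) : ℂ)) := by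
  have hfun : deriv (fun z => phiA p δ κ b a z s) = fun z =>
      rcpow κ (-(Complex.I * δ)) *
        (rcpow (p - 1 + b * z ^ 2 / Real.sqrt s) (-(1 + Complex.I * δ) / (p - 1)) *
          (-(1 + Complex.I * δ) / (p - 1) *
            (((2 * b * z / Real.sqrt s : ℝ) : ℂ) /
              ((p - 1 + b * z ^ 2 / Real.sqrt s : ℝ) : ℂ)))) :=
    funext fun z => (hasDerivAt_phiA_y p δ κ b a s hp hb hs z).deriv
  rw [hfun]
  have heq : (fun z =>
      rcpow κ (-(Complex.I * δ)) *
        (rcpow (p - 1 + b * z ^ 2 / Real.sqrt s) (-(1 + Complex.I * δ) / (p - 1)) *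
          (-(1 + Complex.I * δ) / (p - 1) *
            (((2 * b * z / Real.sqrt s : ℝ) : ℂ) /
              ((p - 1 + b * z ^ 2 / Real.sqrt s : ℝ) : ℂ))))) = fun z =>
      (rcpow κ (-(Complex.I * δ)) * (-(1 + Complex.I * δ) / (p - 1))) *
        (rcpow (p - 1 + b * z ^ 2 / Real.sqrt s) (-(1 + Complex.I * δ) / (p - 1)) *
          ((2 * b * z / Real.sqrt s / (p - 1 + b * z ^ 2 / Real.sqrt s) : ℝ) : ℂ)) :=
    funext fun z => by push_cast; ring
  rw [heq]
  have hnum : HasDerivAt (fun z : ℝ => 2 * b * z / Real.sqrt s) (2 * b / Real.sqrt s) y := by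
    have h := ((hasDerivAt_id y).const_mul (2 * b)).div_const (Real.sqrt s)
    refine h.congr_deriv (Eq.symm ?_)
    ring
  have hw := hnum.div (hasDerivAt_X_y p b s hs y) (X_pos p b y s hp hb hs).ne'
  have hA := hasDerivAt_rcpow_comp (hasDerivAt_X_y p b s hs y) (X_pos p b y s hp hb hs)
      (-(1 + Complex.I * δ) / (p - 1))
  have h2 := (hA.mul hw.ofReal_comp).const_mul
      (rcpow κ (-(Complex.I * δ)) * (-(1 + Complex.I * δ) / (p - 1)))
  exact h2.deriv

end derivs

set_option maxHeartbeats 1000000 in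
lemma Rt_decomp (p δ κ b a y s : ℝ) (hp : 1 < p) (hb : 0 ≤ b) (hs : 0 < s) :
    Rt p δ κ b a y s =
      rcpow κ (-(Complex.I * δ)) * (-(1 + Complex.I * δ) / (p - 1)) *
        rcpow (p - 1 + b * y ^ 2 / Real.sqrt s) (-(1 + Complex.I * δ) / (p - 1)) *
        ((b * y ^ 2 / (2 * s * Real.sqrt s) / (p - 1 + b * y ^ 2 / Real.sqrt s) : ℝ) : ℂ)
    + (1 + Complex.I * δ) * ((a / (2 * s * Real.sqrt s) : ℝ) : ℂ)
    + (rcpow κ (-(Complex.I * δ)) * (-(1 + Complex.I * δ) / (p - 1)) *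
        ((rcpow (p - 1 + b * y ^ 2 / Real.sqrt s) (-(1 + Complex.I * δ) / (p - 1)) *
            (-(1 + Complex.I * δ) / (p - 1) *
              (((2 * b * y / Real.sqrt s : ℝ) : ℂ) /
                ((p - 1 + b * y ^ 2 / Real.sqrt s : ℝ) : ℂ)))) *
          ((2 * b * y / Real.sqrt s / (p - 1 + b * y ^ 2 / Real.sqrt s) : ℝ) : ℂ) +
         rcpow (p - 1 + b * y ^ 2 / Real.sqrt s) (-(1 + Complex.I * δ) / (p - 1)) *
          (((2 * b / Real.sqrt s * (p - 1 + b * y ^ 2 / Real.sqrt s) -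
              2 * b * y / Real.sqrt s * (2 * b * y / Real.sqrt s)) /
            (p - 1 + b * y ^ 2 / Real.sqrt s) ^ 2 : ℝ) : ℂ)))
    + (-(1 + Complex.I * δ) / (p - 1)) * (1 + Complex.I * δ) * ((a / Real.sqrt s : ℝ) : ℂ)
    + ((1 + Complex.I * δ) * ((‖phiA p δ κ b a y s‖ ^ (p - 1) : ℝ) : ℂ) *
          phiA p δ κ b a y s
       - (1 + Complex.I * δ) * (((p - 1 + b * y ^ 2 / Real.sqrt s)⁻¹ : ℝ) : ℂ) *
          (rcpow κ (-(Complex.I * δ)) *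
            rcpow (p - 1 + b * y ^ 2 / Real.sqrt s) (-(1 + Complex.I * δ) / (p - 1)))) := by
  have hrs0 : 0 < Real.sqrt s := Real.sqrt_pos.mpr hs
  have hX0 : 0 < p - 1 + b * y ^ 2 / Real.sqrt s := by
    have h1 : 0 ≤ b * y ^ 2 / Real.sqrt s := by positivity
    linarith
  have hXC : ((p - 1 + b * y ^ 2 / Real.sqrt s : ℝ) : ℂ) ≠ 0 :=
    Complex.ofReal_ne_zero.mpr hX0.ne'
  have hpC : ((p : ℂ) - 1) ≠ 0 := by
    have : ((p - 1 : ℝ) : ℂ) ≠ 0 := Complex.ofReal_ne_zero.mpr (by linarith)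
    push_cast at this; exact this
  have hrsC : ((Real.sqrt s : ℝ) : ℂ) ≠ 0 := Complex.ofReal_ne_zero.mpr hrs0.ne'
  have hsC : ((s : ℝ) : ℂ) ≠ 0 := Complex.ofReal_ne_zero.mpr hs.ne'
  simp only [Rt]
  rw [(hasDerivAt_phiA_s p δ κ b a y s hp hb hs).deriv,
    deriv2_phiA p δ κ b a y s hp hb hs,
    (hasDerivAt_phiA_y p δ κ b a s hp hb hs y).deriv]
  set W : ℂ := ((‖phiA p δ κ b a y s‖ ^ (p - 1) : ℝ) : ℂ) with hW
  simp only [phiA]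
  set F : ℂ := rcpow (p - 1 + b * y ^ 2 / Real.sqrt s) (-(1 + Complex.I * (δ:ℂ)) / ((p:ℂ) - 1)) with hF
  set Kc : ℂ := rcpow κ (-(Complex.I * (δ:ℂ))) with hKc
  push_cast at hXC ⊢
  linear_combination (Kc * F * (1 + Complex.I * (δ:ℂ)) / ((p:ℂ) - 1)) * inv_mul_cancel₀ hXC -
    (Kc * F * (1 + Complex.I * (δ:ℂ)) * ((p:ℂ) - 1 + (b:ℂ) * (y:ℂ) ^ 2 / ((Real.sqrt s : ℝ) : ℂ))⁻¹) * mul_inv_cancel₀ hpC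


lemma abs_rcpow_neg_I (κ δ : ℝ) : ‖rcpow κ (-(Complex.I * δ))‖ = 1 := by
  rw [rcpow, Complex.norm_exp]
  simp [Complex.mul_re]

lemma abs_rcpow_exponent {X : ℝ} (hX : 0 < X) (p δ : ℝ) (hp : 1 < p) :
    ‖rcpow X (-(1 + Complex.I * δ) / ((p:ℂ) - 1))‖ = X ^ (-(1/(p-1)) : ℝ) := by
  have hp0 : p - 1 ≠ 0 := by linarith
  have h1 : (-(1 + Complex.I * (δ:ℂ)) / ((p:ℂ) - 1)) =
      (((p-1)⁻¹ : ℝ) : ℂ) * (-(1 + Complex.I * (δ:ℂ))) := by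
    rw [div_eq_inv_mul]
    push_cast
    ring
  rw [rcpow, Complex.norm_exp, Real.rpow_def_of_pos hX]
  congr 1
  rw [h1]
  simp [Complex.mul_re, Complex.mul_im]
  have hn : Complex.normSq ((p:ℂ) - 1) = (p-1)^2 := by
    simp [Complex.normSq_apply]
    ring
  rw [hn]
  field_simp


set_option maxHeartbeats 2000000 in
/-- there exist `C > 0` and `s₀ ≥ 1` such that `|R(y,s)| ≤ C/√s`
for all `s ≥ s₀` and `y ∈ ℝ`. -/
theorem stmt5 (p δ κ b a : ℝ) (hp : 1 < p) (hδ : δ = Real.sqrt p)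
    (hκ : κ = (p - 1) ^ (-(1 : ℝ) / (p - 1)))
    (hb : b = (p - 1) ^ 2 / (8 * Real.sqrt (p * (p + 1))))
    (ha : a = κ / (4 * Real.sqrt (p * (p + 1)))) :
    ∃ C : ℝ, 0 < C ∧ ∃ s₀ : ℝ, 1 ≤ s₀ ∧ ∀ s : ℝ, s₀ ≤ s → ∀ y : ℝ,
      ‖Rt p δ κ b a y s‖ ≤ C / Real.sqrt s := by
  have hp1 : (0:ℝ) < p - 1 := by linarith
  have hκ0 : 0 < κ := by rw [hκ]; exact Real.rpow_pos_of_pos hp1 _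
  have hsqpp : 0 < Real.sqrt (p * (p + 1)) := Real.sqrt_pos.mpr (by nlinarith)
  have hb0 : 0 < b := by rw [hb]; positivity
  have ha0 : 0 < a := by rw [ha]; positivity
  set ν : ℝ := -(1/(p-1)) with hν
  have hν0 : ν ≤ 0 := by rw [hν]; exact neg_nonpos.mpr (by positivity)
  set Mf : ℝ := (p-1) ^ ν with hMf
  have hMf0 : 0 < Mf := by rw [hMf]; exact Real.rpow_pos_of_pos hp1 _
  set Ae : ℝ := ‖-(1 + Complex.I * (δ:ℂ)) / ((p:ℂ) - 1)‖ with hAe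
  set Ac : ℝ := ‖1 + Complex.I * (δ:ℂ)‖ with hAc
  have hAe0 : 0 ≤ Ae := by rw [hAe]; exact norm_nonneg _
  have hAc0 : 0 ≤ Ac := by rw [hAc]; exact norm_nonneg _
  set M : ℝ := Mf + Ac * a with hM
  have hM0 : 0 < M := by
    have h1 : 0 ≤ Ac * a := mul_nonneg hAc0 ha0.le
    rw [hM]; linarith
  have hMq0 : 0 ≤ M ^ (p-1) := Real.rpow_nonneg hM0.le _
  set C1 : ℝ := Ae * Mf / 2 with hC1
  set C2 : ℝ := Ac * a / 2 with hC2
  set C3 : ℝ := Ae * Mf * (b * (4 * Ae + 6)) / (p-1) with hC3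
  set C4 : ℝ := Ae * Ac * a with hC4
  set C5 : ℝ := Ac * Ac * a * M ^ (p-1) * (5 + 3 * (p-1)) with hC5
  have hC10 : 0 ≤ C1 := by rw [hC1]; have := mul_nonneg hAe0 hMf0.le; linarith
  have hC20 : 0 ≤ C2 := by rw [hC2]; have := mul_nonneg hAc0 ha0.le; linarith
  have hC30 : 0 ≤ C3 := by
    rw [hC3]
    apply div_nonneg _ hp1.le
    apply mul_nonneg (mul_nonneg hAe0 hMf0.le)
    apply mul_nonneg hb0.le
    linarith
  have hC40 : 0 ≤ C4 := by rw [hC4]; exact mul_nonneg (mul_nonneg hAe0 hAc0) ha0.le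
  have hC50 : 0 ≤ C5 := by
    rw [hC5]
    apply mul_nonneg (mul_nonneg (mul_nonneg (mul_nonneg hAc0 hAc0) ha0.le) hMq0)
    linarith
  clear_value C5 C4 C3 C2 C1 M Ac Ae Mf ν
  refine ⟨C1 + C2 + C3 + C4 + C5 + 1, by linarith, 1, le_rfl, ?_⟩
  intro s hs y
  have hs0 : (0:ℝ) < s := by linarith
  have hrs0 : 0 < Real.sqrt s := Real.sqrt_pos.mpr hs0
  have hrs1 : 1 ≤ Real.sqrt s := by
    rw [show (1:ℝ) = Real.sqrt 1 from Real.sqrt_one.symm]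
    exact Real.sqrt_le_sqrt hs
  have hrssq : Real.sqrt s ^ 2 = s := Real.sq_sqrt hs0.le
  have hrss : Real.sqrt s ≤ s := by
    have h1 : Real.sqrt s * 1 ≤ Real.sqrt s * Real.sqrt s :=
      mul_le_mul_of_nonneg_left hrs1 hrs0.le
    have h2 : Real.sqrt s * Real.sqrt s = s := Real.mul_self_sqrt hs0.le
    linarith
  rw [Rt_decomp p δ κ b a y s hp hb0.le hs0]
  set X : ℝ := p - 1 + b * y ^ 2 / Real.sqrt s with hXdef
  have hX0 : 0 < X := by
    rw [hXdef]
    have h1 : 0 ≤ b * y ^ 2 / Real.sqrt s := by positivity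
    linarith
  have hXp : p - 1 ≤ X := by
    rw [hXdef]
    have h1 : 0 ≤ b * y ^ 2 / Real.sqrt s := by positivity
    linarith
  have hbu : b * y ^ 2 / Real.sqrt s ≤ X := by rw [hXdef]; linarith
  have hKabs : ‖rcpow κ (-(Complex.I * (δ:ℂ)))‖ = 1 := abs_rcpow_neg_I κ δ
  have hFabs : ‖rcpow X (-(1 + Complex.I * (δ:ℂ)) / ((p:ℂ) - 1))‖ = X ^ ν := by
    rw [hν]; exact abs_rcpow_exponent hX0 p δ hp
  have hFM : ‖rcpow X (-(1 + Complex.I * (δ:ℂ)) / ((p:ℂ) - 1))‖ ≤ Mf := by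
    rw [hFabs, hMf]
    exact Real.rpow_le_rpow_of_nonpos hp1 hXp hν0
  have hφeq : phiA p δ κ b a y s =
      rcpow κ (-(Complex.I * (δ:ℂ))) * rcpow X (-(1 + Complex.I * (δ:ℂ)) / ((p:ℂ) - 1)) +
      (1 + Complex.I * (δ:ℂ)) * ((a / Real.sqrt s : ℝ) : ℂ) := rfl
  clear_value X
  have hρ0 : 0 ≤ X ^ ν := Real.rpow_nonneg hX0.le _
  have hρMf : X ^ ν ≤ Mf := by
    rw [hMf]; exact Real.rpow_le_rpow_of_nonpos hp1 hXp hν0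
  have hρM : X ^ ν ≤ M := by
    have h2 : 0 ≤ Ac * a := mul_nonneg hAc0 ha0.le
    rw [hM]; linarith
  have hρabs : ‖rcpow κ (-(Complex.I * (δ:ℂ))) *
      rcpow X (-(1 + Complex.I * (δ:ℂ)) / ((p:ℂ) - 1))‖ = X ^ ν := by
    rw [norm_mul, hKabs, one_mul, hFabs]
  have hars : a / Real.sqrt s ≤ a := div_le_self ha0.le hrs1
  have hccabs : ‖(1 + Complex.I * (δ:ℂ)) * ((a / Real.sqrt s : ℝ) : ℂ)‖ =
      Ac * (a / Real.sqrt s) := by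
    rw [norm_mul, Complex.norm_real, Real.norm_eq_abs,
      _root_.abs_of_nonneg (div_nonneg ha0.le hrs0.le), ← hAc]
  have hr0 : 0 ≤ ‖phiA p δ κ b a y s‖ := norm_nonneg _
  have hrM : ‖phiA p δ κ b a y s‖ ≤ M := by
    rw [hφeq]
    refine le_trans (norm_add_le _ _) ?_
    rw [hρabs, hccabs, hM]
    have h2 : Ac * (a / Real.sqrt s) ≤ Ac * a := mul_le_mul_of_nonneg_left hars hAc0
    linarith
  have hrρ : |‖phiA p δ κ b a y s‖ - X ^ ν| ≤ Ac * (a / Real.sqrt s) := by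
    have h1 := abs_norm_sub_norm_le (phiA p δ κ b a y s)
      (rcpow κ (-(Complex.I * (δ:ℂ))) * rcpow X (-(1 + Complex.I * (δ:ℂ)) / ((p:ℂ) - 1)))
    rw [hρabs] at h1
    have h2 : phiA p δ κ b a y s -
        rcpow κ (-(Complex.I * (δ:ℂ))) * rcpow X (-(1 + Complex.I * (δ:ℂ)) / ((p:ℂ) - 1)) =
        (1 + Complex.I * (δ:ℂ)) * ((a / Real.sqrt s : ℝ) : ℂ) := by
      rw [hφeq]; ring
    rw [h2, hccabs] at h1
    exact h1
  have htri : ∀ z1 z2 z3 z4 z5 : ℂ, ‖z1 + z2 + z3 + z4 + z5‖ ≤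
      ‖z1‖ + ‖z2‖ + ‖z3‖ + ‖z4‖ + ‖z5‖ := by
    intro z1 z2 z3 z4 z5
    calc ‖z1 + z2 + z3 + z4 + z5‖
        ≤ ‖z1 + z2 + z3 + z4‖ + ‖z5‖ := norm_add_le _ _
      _ ≤ (‖z1 + z2 + z3‖ + ‖z4‖) + ‖z5‖ :=
          add_le_add_left (norm_add_le _ _) _
      _ ≤ ((‖z1 + z2‖ + ‖z3‖) + ‖z4‖) + ‖z5‖ :=
          add_le_add_left (add_le_add_left (norm_add_le _ _) _) _
      _ ≤ (((‖z1‖ + ‖z2‖) + ‖z3‖) + ‖z4‖) +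
            ‖z5‖ :=
          add_le_add_left (add_le_add_left (add_le_add_left (norm_add_le _ _) _) _) _
  refine le_trans (htri _ _ _ _ _) ?_
  have h2s : (0:ℝ) < 2 * s := by linarith
  have h2srs : (0:ℝ) < 2 * s * Real.sqrt s := mul_pos h2s hrs0
  -- term 1
  have hv1 : (0:ℝ) ≤ b * y ^ 2 / (2 * s * Real.sqrt s) / X :=
    div_nonneg (div_nonneg (by positivity) h2srs.le) hX0.le
  have hv1le : b * y ^ 2 / (2 * s * Real.sqrt s) / X ≤ 1 / (2 * Real.sqrt s) := by
    have h1 : b * y ^ 2 / (2 * s * Real.sqrt s) / X ≤ 1 / (2 * s) := by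
      rw [div_le_div_iff₀ hX0 h2s]
      have key : ∀ t : ℝ, 0 < t → b * y ^ 2 / (2 * s * t) * (2 * s) = b * y ^ 2 / t := by
        intro t ht
        field_simp
      have heq : b * y ^ 2 / (2 * s * Real.sqrt s) * (2 * s) = b * y ^ 2 / Real.sqrt s :=
        key (Real.sqrt s) hrs0
      rw [heq, one_mul]
      exact hbu
    have h2 : (1:ℝ) / (2 * s) ≤ 1 / (2 * Real.sqrt s) :=
      one_div_le_one_div_of_le (by linarith) (by linarith)
    linarith
  have b1 : ‖rcpow κ (-(Complex.I * (δ:ℂ))) *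
      (-(1 + Complex.I * (δ:ℂ)) / ((p:ℂ) - 1)) *
      rcpow X (-(1 + Complex.I * (δ:ℂ)) / ((p:ℂ) - 1)) *
      ((b * y ^ 2 / (2 * s * Real.sqrt s) / X : ℝ) : ℂ)‖ ≤ C1 / Real.sqrt s := by
    rw [norm_mul, norm_mul, norm_mul, hKabs, one_mul, Complex.norm_real, Real.norm_eq_abs,
      _root_.abs_of_nonneg hv1, ← hAe]
    calc Ae * ‖rcpow X (-(1 + Complex.I * (δ:ℂ)) / ((p:ℂ) - 1))‖ *
          (b * y ^ 2 / (2 * s * Real.sqrt s) / X)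
        ≤ Ae * Mf * (1 / (2 * Real.sqrt s)) :=
          mul_le_mul (mul_le_mul_of_nonneg_left hFM hAe0) hv1le hv1
            (mul_nonneg hAe0 hMf0.le)
      _ = C1 / Real.sqrt s := by rw [hC1]; ring
  -- term 2
  have b2 : ‖(1 + Complex.I * (δ:ℂ)) * ((a / (2 * s * Real.sqrt s) : ℝ) : ℂ)‖ ≤
      C2 / Real.sqrt s := by
    rw [norm_mul, Complex.norm_real, Real.norm_eq_abs,
      _root_.abs_of_nonneg (div_nonneg ha0.le h2srs.le), ← hAc]
    have h1 : a / (2 * s * Real.sqrt s) ≤ a / (2 * Real.sqrt s) := by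
      rw [div_le_div_iff₀ h2srs (by linarith)]
      have h2 : 2 * Real.sqrt s ≤ 2 * s * Real.sqrt s := by
        have h3 : 1 * (2 * Real.sqrt s) ≤ s * (2 * Real.sqrt s) :=
          mul_le_mul_of_nonneg_right hs (by linarith)
        linarith [h3]
      calc a * (2 * Real.sqrt s) ≤ a * (2 * s * Real.sqrt s) :=
            mul_le_mul_of_nonneg_left h2 ha0.le
        _ = a * (2 * s * Real.sqrt s) := rfl
    calc Ac * (a / (2 * s * Real.sqrt s)) ≤ Ac * (a / (2 * Real.sqrt s)) :=
          mul_le_mul_of_nonneg_left h1 hAc0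
      _ = C2 / Real.sqrt s := by rw [hC2]; ring
  -- term 3
  have hXsq : (0:ℝ) < X ^ 2 := pow_pos hX0 2
  have hprs : (0:ℝ) < (p - 1) * Real.sqrt s := mul_pos hp1 hrs0
  have hgsq : (2 * b * y / Real.sqrt s) ^ 2 =
      4 * b * (b * y ^ 2 / Real.sqrt s) / Real.sqrt s := by
    have key : ∀ t : ℝ, 0 < t → (2 * b * y / t) ^ 2 = 4 * b * (b * y ^ 2 / t) / t := by
      intro t ht
      field_simp
      ring
    exact key (Real.sqrt s) hrs0
  have hXX : (p - 1) * (b * y ^ 2 / Real.sqrt s) ≤ X ^ 2 := by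
    have h1 : 0 ≤ b * y ^ 2 / Real.sqrt s := by positivity
    calc (p - 1) * (b * y ^ 2 / Real.sqrt s) ≤ X * X := mul_le_mul hXp hbu h1 hX0.le
      _ = X ^ 2 := (pow_two X).symm
  have hq1 : (2 * b * y / Real.sqrt s) ^ 2 / X ^ 2 ≤ 4 * b / ((p - 1) * Real.sqrt s) := by
    rw [div_le_div_iff₀ hXsq hprs, hgsq]
    have key : ∀ t : ℝ, 0 < t → 4 * b * (b * y ^ 2 / t) / t * ((p - 1) * t) =
        4 * b * ((p - 1) * (b * y ^ 2 / t)) := by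
      intro t ht
      field_simp
    have h4 := key (Real.sqrt s) hrs0
    rw [h4]
    exact mul_le_mul_of_nonneg_left hXX (by linarith : (0:ℝ) ≤ 4 * b)
  have hdwle : |(2 * b / Real.sqrt s * X -
      2 * b * y / Real.sqrt s * (2 * b * y / Real.sqrt s)) / X ^ 2| ≤
      6 * b / ((p - 1) * Real.sqrt s) := by
    rw [abs_div, _root_.abs_of_nonneg hXsq.le]
    have hnum : |2 * b / Real.sqrt s * X -
        2 * b * y / Real.sqrt s * (2 * b * y / Real.sqrt s)| ≤
        2 * b / Real.sqrt s * X + (2 * b * y / Real.sqrt s) ^ 2 := by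
      have h1 := abs_sub (2 * b / Real.sqrt s * X)
        (2 * b * y / Real.sqrt s * (2 * b * y / Real.sqrt s))
      rw [_root_.abs_of_nonneg (by positivity : (0:ℝ) ≤ 2 * b / Real.sqrt s * X),
        _root_.abs_of_nonneg (mul_self_nonneg (2 * b * y / Real.sqrt s))] at h1
      have h2 : 2 * b * y / Real.sqrt s * (2 * b * y / Real.sqrt s) =
          (2 * b * y / Real.sqrt s) ^ 2 := (pow_two _).symm
      linarith
    refine le_trans ((div_le_div_iff_of_pos_right hXsq).mpr hnum) ?_
    rw [div_le_div_iff₀ hXsq hprs, hgsq]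
    have key2 : ∀ t : ℝ, 0 < t → (2 * b / t * X + 4 * b * (b * y ^ 2 / t) / t) *
        ((p - 1) * t) = 2 * b * ((p - 1) * X) + 4 * b * ((p - 1) * (b * y ^ 2 / t)) := by
      intro t ht
      field_simp
    have hexp := key2 (Real.sqrt s) hrs0
    rw [hexp]
    have hPX : (p - 1) * X ≤ X ^ 2 := by
      rw [pow_two]; exact mul_le_mul_of_nonneg_right hXp hX0.le
    have e1 : 2 * b * ((p - 1) * X) ≤ 2 * b * X ^ 2 :=
      mul_le_mul_of_nonneg_left hPX (by linarith)
    have e2 : 4 * b * ((p - 1) * (b * y ^ 2 / Real.sqrt s)) ≤ 4 * b * X ^ 2 :=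
      mul_le_mul_of_nonneg_left hXX (by linarith)
    linarith
  have hw0 : (0:ℝ) ≤ |2 * b * y / Real.sqrt s| / X := div_nonneg (abs_nonneg _) hX0.le
  have hww : |2 * b * y / Real.sqrt s| / X * (|2 * b * y / Real.sqrt s| / X) ≤
      4 * b / ((p - 1) * Real.sqrt s) := by
    have heq : |2 * b * y / Real.sqrt s| / X * (|2 * b * y / Real.sqrt s| / X) =
        (2 * b * y / Real.sqrt s) ^ 2 / X ^ 2 := by
      rw [div_mul_div_comm, abs_mul_abs_self, ← pow_two, ← pow_two]
    rw [heq]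
    exact hq1
  have b3 : ‖rcpow κ (-(Complex.I * (δ:ℂ))) *
      (-(1 + Complex.I * (δ:ℂ)) / ((p:ℂ) - 1)) *
      ((rcpow X (-(1 + Complex.I * (δ:ℂ)) / ((p:ℂ) - 1)) *
          (-(1 + Complex.I * (δ:ℂ)) / ((p:ℂ) - 1) *
            (((2 * b * y / Real.sqrt s : ℝ) : ℂ) / ((X : ℝ) : ℂ)))) *
        ((2 * b * y / Real.sqrt s / X : ℝ) : ℂ) +
       rcpow X (-(1 + Complex.I * (δ:ℂ)) / ((p:ℂ) - 1)) *
        (((2 * b / Real.sqrt s * X - 2 * b * y / Real.sqrt s * (2 * b * y / Real.sqrt s)) /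
          X ^ 2 : ℝ) : ℂ))‖ ≤ C3 / Real.sqrt s := by
    rw [norm_mul, norm_mul, hKabs, one_mul, ← hAe]
    have ht3a : ‖(rcpow X (-(1 + Complex.I * (δ:ℂ)) / ((p:ℂ) - 1)) *
        (-(1 + Complex.I * (δ:ℂ)) / ((p:ℂ) - 1) *
          (((2 * b * y / Real.sqrt s : ℝ) : ℂ) / ((X : ℝ) : ℂ)))) *
        ((2 * b * y / Real.sqrt s / X : ℝ) : ℂ)‖ ≤
        Mf * Ae * (4 * b / ((p - 1) * Real.sqrt s)) := by
      simp only [norm_mul, norm_div, Complex.norm_real, Real.norm_eq_abs]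
      rw [show ‖-(1 + Complex.I * (δ:ℂ))‖ / ‖(p:ℂ) - 1‖ = Ae from by
        rw [hAe, norm_div], _root_.abs_of_pos hX0, ← abs_mul, ← abs_mul, ← abs_div]
      have heq2 : ‖rcpow X (-(1 + Complex.I * (δ:ℂ)) / ((p:ℂ) - 1))‖ *
          (Ae * (|2 * b * y / Real.sqrt s| / X)) * (|2 * b * y / Real.sqrt s| / X) =
          ‖rcpow X (-(1 + Complex.I * (δ:ℂ)) / ((p:ℂ) - 1))‖ * Ae *
            (|2 * b * y / Real.sqrt s| / X * (|2 * b * y / Real.sqrt s| / X)) := by ring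
      rw [heq2]
      exact mul_le_mul (mul_le_mul_of_nonneg_right hFM hAe0) hww
        (mul_nonneg hw0 hw0) (mul_nonneg hMf0.le hAe0)
    have ht3b : ‖rcpow X (-(1 + Complex.I * (δ:ℂ)) / ((p:ℂ) - 1)) *
        (((2 * b / Real.sqrt s * X - 2 * b * y / Real.sqrt s * (2 * b * y / Real.sqrt s)) /
          X ^ 2 : ℝ) : ℂ)‖ ≤ Mf * (6 * b / ((p - 1) * Real.sqrt s)) := by
      rw [norm_mul, Complex.norm_real, Real.norm_eq_abs]
      exact mul_le_mul hFM hdwle (abs_nonneg _) hMf0.le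
    refine le_trans (mul_le_mul_of_nonneg_left
      (le_trans (norm_add_le _ _) (add_le_add ht3a ht3b)) hAe0) (le_of_eq ?_)
    rw [hC3]
    field_simp
  -- term 4
  have b4 : ‖(-(1 + Complex.I * (δ:ℂ)) / ((p:ℂ) - 1)) *
      (1 + Complex.I * (δ:ℂ)) * ((a / Real.sqrt s : ℝ) : ℂ)‖ ≤ C4 / Real.sqrt s := by
    rw [norm_mul, norm_mul, Complex.norm_real, Real.norm_eq_abs,
      _root_.abs_of_nonneg (div_nonneg ha0.le hrs0.le), ← hAe, ← hAc]
    rw [hC4]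
    exact le_of_eq (by ring)
  -- term 5
  have hρpow : (X ^ ν) ^ (p-1) = X⁻¹ := by
    have h1 : (X ^ ν) ^ (p-1) = X ^ (ν * (p-1)) := (Real.rpow_mul hX0.le ν (p-1)).symm
    rw [h1, show ν * (p-1) = -1 by rw [hν]; field_simp, Real.rpow_neg_one]
  have hE5eq : (1 + Complex.I * (δ:ℂ)) *
        ((‖phiA p δ κ b a y s‖ ^ (p - 1) : ℝ) : ℂ) * phiA p δ κ b a y s -
      (1 + Complex.I * (δ:ℂ)) * ((X⁻¹ : ℝ) : ℂ) *
        (rcpow κ (-(Complex.I * (δ:ℂ))) *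
          rcpow X (-(1 + Complex.I * (δ:ℂ)) / ((p:ℂ) - 1))) =
      (1 + Complex.I * (δ:ℂ)) *
        (((‖phiA p δ κ b a y s‖ ^ (p - 1) : ℝ) : ℂ) *
            (phiA p δ κ b a y s - rcpow κ (-(Complex.I * (δ:ℂ))) *
              rcpow X (-(1 + Complex.I * (δ:ℂ)) / ((p:ℂ) - 1))) +
          (((‖phiA p δ κ b a y s‖ ^ (p - 1) : ℝ) : ℂ) -
            (((X ^ ν) ^ (p - 1) : ℝ) : ℂ)) *
            (rcpow κ (-(Complex.I * (δ:ℂ))) *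
              rcpow X (-(1 + Complex.I * (δ:ℂ)) / ((p:ℂ) - 1)))) := by
    rw [hρpow]
    ring
  have b5 : ‖(1 + Complex.I * (δ:ℂ)) *
        ((‖phiA p δ κ b a y s‖ ^ (p - 1) : ℝ) : ℂ) * phiA p δ κ b a y s -
      (1 + Complex.I * (δ:ℂ)) * ((X⁻¹ : ℝ) : ℂ) *
        (rcpow κ (-(Complex.I * (δ:ℂ))) *
          rcpow X (-(1 + Complex.I * (δ:ℂ)) / ((p:ℂ) - 1)))‖ ≤ C5 / Real.sqrt s := by
    rw [hE5eq, norm_mul, ← hAc]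
    have h5a : ‖((‖phiA p δ κ b a y s‖ ^ (p - 1) : ℝ) : ℂ) *
        (phiA p δ κ b a y s - rcpow κ (-(Complex.I * (δ:ℂ))) *
          rcpow X (-(1 + Complex.I * (δ:ℂ)) / ((p:ℂ) - 1)))‖ ≤
        M ^ (p - 1) * (Ac * (a / Real.sqrt s)) := by
      have hsub : phiA p δ κ b a y s - rcpow κ (-(Complex.I * (δ:ℂ))) *
          rcpow X (-(1 + Complex.I * (δ:ℂ)) / ((p:ℂ) - 1)) =
          (1 + Complex.I * (δ:ℂ)) * ((a / Real.sqrt s : ℝ) : ℂ) := by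
        rw [hφeq]; ring
      rw [norm_mul, Complex.norm_real, Real.norm_eq_abs, hsub, hccabs,
        _root_.abs_of_nonneg (Real.rpow_nonneg hr0 _)]
      exact mul_le_mul_of_nonneg_right (Real.rpow_le_rpow hr0 hrM hp1.le)
        (mul_nonneg hAc0 (div_nonneg ha0.le hrs0.le))
    have h5b : ‖(((‖phiA p δ κ b a y s‖ ^ (p - 1) : ℝ) : ℂ) -
        (((X ^ ν) ^ (p - 1) : ℝ) : ℂ)) *
        (rcpow κ (-(Complex.I * (δ:ℂ))) *
          rcpow X (-(1 + Complex.I * (δ:ℂ)) / ((p:ℂ) - 1)))‖ ≤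
        (4 + 3 * (p - 1)) * M ^ (p - 1) * (Ac * (a / Real.sqrt s)) := by
      rw [norm_mul, ← Complex.ofReal_sub, Complex.norm_real, Real.norm_eq_abs, hρabs]
      exact rpow_diff_mul_le hp1 hr0 hρ0 hrM hρM hrρ
    refine le_trans (mul_le_mul_of_nonneg_left
      (le_trans (norm_add_le _ _) (add_le_add h5a h5b)) hAc0) (le_of_eq ?_)
    rw [hC5]
    field_simp
    ring
  have hsum : C1 / Real.sqrt s + C2 / Real.sqrt s + C3 / Real.sqrt s + C4 / Real.sqrt s +
      C5 / Real.sqrt s ≤ (C1 + C2 + C3 + C4 + C5 + 1) / Real.sqrt s := by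
    rw [← add_div, ← add_div, ← add_div, ← add_div]
    exact (div_le_div_iff_of_pos_right hrs0).mpr (by linarith)
  linarith [b1, b2, b3, b4, b5, hsum]
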